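/- There exists a norm on ℂ² (a complex norm, namely ‖(x,y)‖ = max_{0≤k≤4} |x − λ_k y| for suitable unimodular λ₁,…,λ₄ with positive real parts, λ₀ = 0, and λ_j λ_k ≠ λ_l λ_m whenever {j,k} ≠ {l,m} in {1,2,3,4}) for which every surjective ℝ-linear isometry of ℂ² is of the form (x,y) ↦ (λx, λy) for some complex λ with |λ| = 1. -/

import Mathlib

open Complex
noncomputable section
namespace Complex
def abs : AbsoluteValue ℂ ℝ where
  toFun z := ‖z‖
  map_mul' := norm_mul
  nonneg' := norm_nonneg
  eq_zero' _ := norm_eq_zero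
  add_le' := norm_add_le
lemma abs_def' (z : ℂ) : abs z = ‖z‖ := rfl
lemma sq_abs (z : ℂ) : abs z ^ 2 = normSq z := Complex.sq_norm z
lemma abs_apply (z : ℂ) : abs z = Real.sqrt (normSq z) := Complex.norm_def z
lemma abs_conj (z : ℂ) : abs ((starRingEnd ℂ) z) = abs z := Complex.norm_conj z
lemma abs_I : abs I = 1 := Complex.norm_I
lemma abs_two : abs 2 = 2 := Complex.norm_two
lemma abs_ofReal (r : ℝ) : abs (r : ℂ) = |r| := by
  rw [abs_def', Complex.norm_real, Real.norm_eq_abs]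
lemma abs_exp_ofReal_mul_I (x : ℝ) : abs (exp (x * I)) = 1 := norm_exp_ofReal_mul_I x
lemma abs_exp_sub_one_le {x : ℂ} (hx : abs x ≤ 1) : abs (exp x - 1) ≤ 2 * abs x :=
  norm_exp_sub_one_le hx
end Complex
namespace S17
def NN (l : Fin 5 → ℂ) (p : ℂ × ℂ) : ℝ := ⨆ k : Fin 5, Complex.abs (p.1 - l k * p.2)

lemma le_NN (l : Fin 5 → ℂ) (p : ℂ × ℂ) (k : Fin 5) : Complex.abs (p.1 - l k * p.2) ≤ NN l p :=
  le_ciSup (f := fun k : Fin 5 => Complex.abs (p.1 - l k * p.2))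
    ((Set.finite_range _).bddAbove) k

lemma NN_le (l : Fin 5 → ℂ) (p : ℂ × ℂ) {c : ℝ} (h : ∀ k, Complex.abs (p.1 - l k * p.2) ≤ c) :
    NN l p ≤ c := ciSup_le h

lemma NN_attained (l : Fin 5 → ℂ) (p : ℂ × ℂ) : ∃ k, NN l p = Complex.abs (p.1 - l k * p.2) := by
  obtain ⟨b, -, hb⟩ := Finset.exists_max_image (Finset.univ : Finset (Fin 5))
    (fun k => Complex.abs (p.1 - l k * p.2)) ⟨0, Finset.mem_univ 0⟩
  exact ⟨b, le_antisymm (NN_le l p fun k => hb k (Finset.mem_univ k)) (le_NN l p b)⟩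

lemma NN_smul (l : Fin 5 → ℂ) (c : ℂ) (p : ℂ × ℂ) : NN l (c • p) = Complex.abs c * NN l p := by
  have key : ∀ (c : ℂ) (p : ℂ × ℂ), NN l (c • p) ≤ Complex.abs c * NN l p := by
    intro c p
    apply NN_le
    intro k
    have : (c • p).1 - l k * (c • p).2 = c * (p.1 - l k * p.2) := by
      simp [Prod.smul_fst, Prod.smul_snd, smul_eq_mul]; ring
    rw [this, map_mul]
    exact mul_le_mul_of_nonneg_left (le_NN l p k) (Complex.abs.nonneg c)
  rcases eq_or_ne c 0 with rfl | hc
  · simp only [zero_smul, map_zero, zero_mul]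
    have h1 : NN l 0 ≤ 0 := NN_le l 0 (by intro k; simp)
    have h2 : (0:ℝ) ≤ NN l 0 := le_trans (Complex.abs.nonneg _) (le_NN l 0 0)
    linarith
  · refine le_antisymm (key c p) ?_
    have := key c⁻¹ (c • p)
    rw [inv_smul_smul₀ hc, map_inv₀] at this
    have habs : (0:ℝ) < Complex.abs c := Complex.abs.pos hc
    calc Complex.abs c * NN l p ≤ Complex.abs c * ((Complex.abs c)⁻¹ * NN l (c • p)) :=
          mul_le_mul_of_nonneg_left this habs.le
      _ = NN l (c • p) := by field_simp

lemma NN_add (l : Fin 5 → ℂ) (p q : ℂ × ℂ) : NN l (p + q) ≤ NN l p + NN l q := by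
  apply NN_le
  intro k
  have : (p + q).1 - l k * (p + q).2 = (p.1 - l k * p.2) + (q.1 - l k * q.2) := by
    simp [Prod.fst_add, Prod.snd_add]; ring
  rw [this]
  exact le_trans (Complex.abs.add_le _ _) (add_le_add (le_NN l p k) (le_NN l q k))

lemma NN_zero (l : Fin 5 → ℂ) (h0 : l 0 = 0) (h1 : Complex.abs (l 1) = 1) (p : ℂ × ℂ)
    (h : NN l p = 0) : p = 0 := by
  have k0 := le_NN l p 0
  have k1 := le_NN l p 1
  rw [h, h0] at k0
  rw [h] at k1
  simp only [zero_mul, sub_zero] at k0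
  have hp1 : p.1 = 0 := by
    have h2 := Complex.abs.nonneg p.1
    exact Complex.abs.eq_zero.mp (le_antisymm k0 h2)
  rw [hp1, zero_sub, map_neg_eq_map, map_mul, h1, one_mul] at k1
  have hp2 : p.2 = 0 := Complex.abs.eq_zero.mp (le_antisymm k1 (Complex.abs.nonneg _))
  exact Prod.ext hp1 hp2

-- complex helpers
lemma normSq_one_of_abs {z : ℂ} (h : Complex.abs z = 1) : normSq z = 1 := by
  rw [← Complex.sq_abs, h]; norm_num

lemma abs_one_of_normSq {z : ℂ} (h : normSq z = 1) : Complex.abs z = 1 := by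
  rw [Complex.abs_apply, h, Real.sqrt_one]

lemma mul_conj_self {z : ℂ} (h : Complex.abs z = 1) : z * (starRingEnd ℂ) z = 1 := by
  rw [Complex.mul_conj, normSq_one_of_abs h]; norm_num

lemma conj_mul_self {z : ℂ} (h : Complex.abs z = 1) : (starRingEnd ℂ) z * z = 1 := by
  rw [mul_comm]; exact mul_conj_self h

lemma abs_one_add_lt {w : ℂ} (h1 : Complex.abs w ≤ 1) (h2 : w ≠ 1) :
    Complex.abs (1 + w) < 2 := by
  have hns : normSq w ≤ 1 := by
    rw [← Complex.sq_abs]; nlinarith [Complex.abs.nonneg w]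
  have hre : w.re < 1 := by
    by_contra hge
    push_neg at hge
    have hns' : normSq w = w.re^2 + w.im^2 := by rw [Complex.normSq_apply]; ring
    have hh : w.re = 1 ∧ w.im = 0 := by constructor <;> nlinarith
    exact h2 (Complex.ext (by simp [hh.1]) (by simp [hh.2]))
  have hns2 : normSq (1 + w) < 4 := by
    simp only [Complex.normSq_apply, Complex.add_re, Complex.add_im, Complex.one_re,
      Complex.one_im]
    have := Complex.normSq_apply w
    nlinarith
  nlinarith [Complex.abs.nonneg (1 + w), Complex.sq_abs (1 + w)]

lemma eq_zero_of_pm {a b : ℂ} (ha : Complex.abs a = 1) (h1 : Complex.abs (a + b) ≤ 1)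
    (h2 : Complex.abs (a - b) ≤ 1) : b = 0 := by
  have e1 : normSq (a + b) ≤ 1 := by
    rw [← Complex.sq_abs]; nlinarith [Complex.abs.nonneg (a+b)]
  have e2 : normSq (a - b) ≤ 1 := by
    rw [← Complex.sq_abs]; nlinarith [Complex.abs.nonneg (a-b)]
  have e3 : normSq a = 1 := normSq_one_of_abs ha
  have hb : normSq b ≤ 0 := by
    simp only [Complex.normSq_apply, Complex.add_re, Complex.add_im, Complex.sub_re,
      Complex.sub_im] at e1 e2 e3 ⊢
    nlinarith
  have := Complex.normSq_nonneg b
  exact Complex.normSq_eq_zero.mp (le_antisymm hb this)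

section Main
variable {l : Fin 5 → ℂ}

lemma ker2 (hinj : Function.Injective l) {j j' : Fin 5} (hne : j ≠ j') {v : ℂ × ℂ}
    (hj : v.1 - l j * v.2 = 0) (hj' : v.1 - l j' * v.2 = 0) : v = 0 := by
  have h2 : (l j - l j') * v.2 = 0 := by linear_combination hj' - hj
  have hl : l j - l j' ≠ 0 := sub_ne_zero.mpr (fun h => hne (hinj h))
  have hv2 : v.2 = 0 := by
    rcases mul_eq_zero.mp h2 with h | h
    · exact absurd h hl
    · exact h
  have hv1 : v.1 = 0 := by rw [hv2, mul_zero, sub_zero] at hj; exact hj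
  exact Prod.ext hv1 hv2

def Vm (l : Fin 5 → ℂ) (p v : ℂ × ℂ) : Prop :=
  ∃ ε : ℝ, 0 < ε ∧ ∀ t : ℝ, |t| ≤ ε → NN l (p + t • v) ≤ 1

lemma fk_add_smul (k : Fin 5) (p v : ℂ × ℂ) (t : ℝ) :
    (p + t • v).1 - l k * (p + t • v).2
      = (p.1 - l k * p.2) + (t:ℂ) * (v.1 - l k * v.2) := by
  simp only [Prod.fst_add, Prod.snd_add, Prod.smul_fst, Prod.smul_snd, Complex.real_smul]
  ring

lemma Vm_of_ker {k : Fin 5} {p v : ℂ × ℂ} (hkv : v.1 - l k * v.2 = 0)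
    (hk1 : Complex.abs (p.1 - l k * p.2) ≤ 1)
    (hlt : ∀ j, j ≠ k → Complex.abs (p.1 - l j * p.2) < 1) : Vm l p v := by
  set g : Fin 5 → ℝ := fun j => if j = k then 1 else
    (1 - Complex.abs (p.1 - l j * p.2)) / (1 + Complex.abs (v.1 - l j * v.2)) with hg
  have hpos : ∀ j, 0 < g j := by
    intro j
    rw [hg]
    by_cases hj : j = k
    · simp [hj]
    · simp only [if_neg hj]
      apply div_pos (by linarith [hlt j hj]) (by positivity)
  set ε : ℝ := Finset.univ.inf' ⟨0, Finset.mem_univ 0⟩ g with hε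
  refine ⟨ε, ?_, ?_⟩
  · rw [hε]
    exact (Finset.lt_inf'_iff ..).2 fun j _ => hpos j
  · intro t ht
    apply NN_le
    intro j
    rw [fk_add_smul]
    by_cases hj : j = k
    · rw [hj, hkv, mul_zero, add_zero]; exact hk1
    · have hεj : ε ≤ g j := Finset.inf'_le g (Finset.mem_univ j)
      have habs : Complex.abs ((t:ℂ) * (v.1 - l j * v.2)) ≤ 1 - Complex.abs (p.1 - l j * p.2) := by
        rw [map_mul, Complex.abs_ofReal]
        have h1 : |t| * Complex.abs (v.1 - l j * v.2)
            ≤ g j * (1 + Complex.abs (v.1 - l j * v.2)) := by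
          apply mul_le_mul (le_trans ht hεj) (by linarith [Complex.abs.nonneg (v.1 - l j * v.2)])
            (Complex.abs.nonneg _) (hpos j).le
        rw [hg] at h1
        simp only [if_neg hj] at h1
        rw [div_mul_cancel₀] at h1
        · exact h1
        · positivity
      calc Complex.abs ((p.1 - l j * p.2) + (t:ℂ) * (v.1 - l j * v.2))
          ≤ Complex.abs (p.1 - l j * p.2) + Complex.abs ((t:ℂ) * (v.1 - l j * v.2)) :=
            Complex.abs.add_le _ _
        _ ≤ 1 := by linarith

lemma ker_of_Vm {k : Fin 5} {q u : ℂ × ℂ} (hq : Complex.abs (q.1 - l k * q.2) = 1)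
    (hvm : Vm l q u) : u.1 - l k * u.2 = 0 := by
  obtain ⟨ε, hε, hb⟩ := hvm
  have h1 := le_trans (le_NN l _ k) (hb ε (by rw [abs_of_pos hε]))
  have h2 := le_trans (le_NN l _ k) (hb (-ε) (by rw [abs_neg, abs_of_pos hε]))
  rw [fk_add_smul] at h1 h2
  push_cast at h2
  have h2' : Complex.abs ((q.1 - l k * q.2) - (ε:ℂ) * (u.1 - l k * u.2)) ≤ 1 := by
    have : (q.1 - l k * q.2) + -(ε:ℂ) * (u.1 - l k * u.2)
        = (q.1 - l k * q.2) - (ε:ℂ) * (u.1 - l k * u.2) := by ring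
    rwa [this] at h2
  have := eq_zero_of_pm hq h1 h2'
  rcases mul_eq_zero.mp this with h | h
  · exact absurd h (by exact_mod_cast ne_of_gt hε)
  · exact h

def wv (l : Fin 5 → ℂ) (k : Fin 5) : ℂ × ℂ :=
  if k = 0 then (1, 1/2) else (1/2, -((starRingEnd ℂ) (l k))/2)

lemma fk_csmul (k : Fin 5) (z : ℂ) (w : ℂ × ℂ) :
    (z • w).1 - l k * (z • w).2 = z * (w.1 - l k * w.2) := by
  simp only [Prod.smul_fst, Prod.smul_snd, smul_eq_mul]; ring

lemma abs_half : Complex.abs (1/2) = 1/2 := by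
  rw [map_div₀, map_one, Complex.abs_two]

lemma wv_zero : wv l 0 = (1, 1/2) := if_pos rfl

lemma wv_ne {k : Fin 5} (hk : k ≠ 0) : wv l k = (1/2, -((starRingEnd ℂ) (l k))/2) := if_neg hk

lemma fw_self (h0 : l 0 = 0) (h1 : ∀ k, k ≠ 0 → Complex.abs (l k) = 1) (k : Fin 5) :
    (wv l k).1 - l k * (wv l k).2 = 1 := by
  by_cases hk : k = 0
  · subst hk; rw [wv_zero, h0]
    show (1:ℂ) - 0 * (1/2) = 1
    ring
  · rw [wv_ne hk]
    show (1/2:ℂ) - l k * (-((starRingEnd ℂ) (l k))/2) = 1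
    have := mul_conj_self (h1 k hk)
    linear_combination this/2

lemma fw_lt (h0 : l 0 = 0) (h1 : ∀ k, k ≠ 0 → Complex.abs (l k) = 1)
    (hinj : Function.Injective l) (hc : ∀ k, k ≠ 0 → Complex.abs (l k - 1) < 1/2)
    {j k : Fin 5} (hjk : j ≠ k) :
    Complex.abs ((wv l k).1 - l j * (wv l k).2) < 1 := by
  by_cases hk : k = 0
  · subst hk
    rw [wv_zero]
    have hj : j ≠ 0 := hjk
    have hrw : ((1:ℂ), (1/2:ℂ)).1 - l j * ((1:ℂ), (1/2:ℂ)).2 = (1 + (1 - l j)) / 2 := by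
      show (1:ℂ) - l j * (1/2) = (1 + (1 - l j)) / 2
      ring
    rw [hrw, map_div₀, Complex.abs_two]
    have hb : Complex.abs (1 + (1 - l j)) ≤ 1 + Complex.abs (1 - l j) := by
      have h3 := Complex.abs.add_le 1 (1 - l j)
      rwa [map_one] at h3
    have := hc j hj
    rw [Complex.abs.map_sub (l j) 1] at this
    linarith
  · rw [wv_ne hk]
    by_cases hj : j = 0
    · subst hj
      rw [h0]
      show Complex.abs ((1/2:ℂ) - 0 * _) < 1
      rw [zero_mul, sub_zero, abs_half]; norm_num
    · have hw : ((1/2:ℂ), -((starRingEnd ℂ) (l k))/2).1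
            - l j * ((1/2:ℂ), -((starRingEnd ℂ) (l k))/2).2
          = (1 + l j * (starRingEnd ℂ) (l k)) / 2 := by
        show (1/2 : ℂ) - l j * (-((starRingEnd ℂ) (l k))/2)
          = (1 + l j * (starRingEnd ℂ) (l k)) / 2
        ring
      rw [hw, map_div₀, Complex.abs_two]
      have habsw : Complex.abs (l j * (starRingEnd ℂ) (l k)) = 1 := by
        rw [map_mul, Complex.abs_conj, h1 j hj, h1 k hk, mul_one]
      have hwne : l j * (starRingEnd ℂ) (l k) ≠ 1 := by
        intro h
        apply hjk
        apply hinj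
        have := conj_mul_self (h1 k hk)
        calc l j = l j * ((starRingEnd ℂ) (l k) * l k) := by rw [this, mul_one]
          _ = (l j * (starRingEnd ℂ) (l k)) * l k := by ring
          _ = l k := by rw [h, one_mul]
      have := abs_one_add_lt (le_of_eq habsw) hwne
      linarith

lemma fw_z_self (h0 : l 0 = 0) (h1 : ∀ k, k ≠ 0 → Complex.abs (l k) = 1) (k : Fin 5) (z : ℂ) :
    (z • wv l k).1 - l k * (z • wv l k).2 = z := by
  rw [fk_csmul, fw_self h0 h1, mul_one]

lemma fw_z_lt (h0 : l 0 = 0) (h1 : ∀ k, k ≠ 0 → Complex.abs (l k) = 1)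
    (hinj : Function.Injective l) (hc : ∀ k, k ≠ 0 → Complex.abs (l k - 1) < 1/2)
    {j k : Fin 5} (hjk : j ≠ k) {z : ℂ} (hz : Complex.abs z = 1) :
    Complex.abs ((z • wv l k).1 - l j * (z • wv l k).2) < 1 := by
  rw [fk_csmul, map_mul, hz, one_mul]
  exact fw_lt h0 h1 hinj hc hjk

lemma NN_wz (h0 : l 0 = 0) (h1 : ∀ k, k ≠ 0 → Complex.abs (l k) = 1)
    (hinj : Function.Injective l) (hc : ∀ k, k ≠ 0 → Complex.abs (l k - 1) < 1/2)
    (k : Fin 5) {z : ℂ} (hz : Complex.abs z = 1) : NN l (z • wv l k) = 1 := by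
  apply le_antisymm
  · apply NN_le
    intro j
    by_cases hj : j = k
    · subst hj; rw [fw_z_self h0 h1, hz]
    · exact (fw_z_lt h0 h1 hinj hc hj hz).le
  · have hx : Complex.abs ((z • wv l k).1 - l k * (z • wv l k).2) = 1 := by
      rw [fw_z_self h0 h1, hz]
    have h4 := le_NN l (z • wv l k) k
    rw [hx] at h4
    exact h4

lemma sigma_exists (h0 : l 0 = 0) (h1 : ∀ k, k ≠ 0 → Complex.abs (l k) = 1)
    (hinj : Function.Injective l) (hc : ∀ k, k ≠ 0 → Complex.abs (l k - 1) < 1/2)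
    (T : (ℂ × ℂ) ≃ₗ[ℝ] (ℂ × ℂ)) (hT : ∀ p, NN l (T p) = NN l p) (k : Fin 5) :
    ∃ j : Fin 5, (∀ v : ℂ × ℂ, v.1 - l k * v.2 = 0 → (T v).1 - l j * (T v).2 = 0) ∧
      (∀ z : ℂ, Complex.abs z = 1 →
        Complex.abs ((T (z • wv l k)).1 - l j * (T (z • wv l k)).2) = 1) := by
  have key : ∀ z : ℂ, Complex.abs z = 1 →
      ∃ j, Complex.abs ((T (z • wv l k)).1 - l j * (T (z • wv l k)).2) = 1 ∧
        ∀ v : ℂ × ℂ, v.1 - l k * v.2 = 0 → (T v).1 - l j * (T v).2 = 0 := by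
    intro z hz
    obtain ⟨j, hj⟩ := NN_attained l (T (z • wv l k))
    have hNN : NN l (T (z • wv l k)) = 1 := by rw [hT]; exact NN_wz h0 h1 hinj hc k hz
    refine ⟨j, by rw [← hj, hNN], ?_⟩
    intro v hv
    have hvm : Vm l (z • wv l k) v :=
      Vm_of_ker hv (le_of_eq (by rw [fw_z_self h0 h1, hz]))
        (fun j' hj' => fw_z_lt h0 h1 hinj hc hj' hz)
    have hvm' : Vm l (T (z • wv l k)) (T v) := by
      obtain ⟨ε, hε, hb⟩ := hvm
      exact ⟨ε, hε, fun t ht => by rw [← map_smul, ← map_add, hT]; exact hb t ht⟩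
    exact ker_of_Vm (by rw [← hj, hNN]) hvm'
  obtain ⟨j, -, hj2⟩ := key 1 (by simp)
  refine ⟨j, hj2, ?_⟩
  intro z hz
  obtain ⟨jz, hz1, hz2⟩ := key z hz
  have hjz : jz = j := by
    by_contra hne
    set κ : ℂ × ℂ := (l k, 1) with hκdef
    have hκ : κ.1 - l k * κ.2 = 0 := by simp [hκdef]
    have h01 := hj2 κ hκ
    have h02 := hz2 κ hκ
    have hTκ := ker2 hinj hne h02 h01
    have hκ0 : κ ≠ 0 := by simp [hκdef, Prod.ext_iff]
    exact hκ0 (T.map_eq_zero_iff.mp hTκ)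
  rw [← hjz]; exact hz1

def z5 : ℂ := ⟨3/5, 4/5⟩

lemma z5_abs : Complex.abs z5 = 1 := by
  apply abs_one_of_normSq
  rw [z5, Complex.normSq_mk]; norm_num

lemma AB_struct {A B : ℂ} (e1 : normSq (A + B) = 1) (e2 : normSq (A - B) = 1)
    (e3 : normSq (A * z5 + B * (starRingEnd ℂ) z5) = 1) :
    (B = 0 ∧ Complex.abs A = 1) ∨ (A = 0 ∧ Complex.abs B = 1) := by
  have hre : z5.re = 3/5 := rfl
  have him : z5.im = 4/5 := rfl
  simp only [Complex.normSq_apply, Complex.add_re, Complex.add_im, Complex.sub_re,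
    Complex.sub_im, Complex.mul_re, Complex.mul_im, Complex.conj_re, Complex.conj_im,
    hre, him] at e1 e2 e3
  have hc : A.re * B.re + A.im * B.im = 0 := by nlinarith
  have hd : A.im * B.re - A.re * B.im = 0 := by nlinarith
  have hsum : normSq A + normSq B = 1 := by
    simp only [Complex.normSq_apply]; nlinarith
  have hAB : A * (starRingEnd ℂ) B = 0 := by
    apply Complex.ext <;>
      simp only [Complex.mul_re, Complex.mul_im, Complex.conj_re, Complex.conj_im,
        Complex.zero_re, Complex.zero_im] <;> nlinarith
  rcases mul_eq_zero.mp hAB with hA | hB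
  · right
    refine ⟨hA, ?_⟩
    apply abs_one_of_normSq
    rw [hA] at hsum; simp at hsum; linarith [hsum]
  · left
    have hB0 : B = 0 := by
      have := congrArg (starRingEnd ℂ) hB
      rwa [Complex.conj_conj, map_zero] at this
    refine ⟨hB0, ?_⟩
    apply abs_one_of_normSq
    rw [hB0] at hsum; simp at hsum; linarith [hsum]

lemma conj_ll_inj (hinj : Function.Injective l) {j k : Fin 5} (hjk : j ≠ k) :
    (starRingEnd ℂ) (l j) ≠ (starRingEnd ℂ) (l k) := by
  intro h
  apply hjk
  apply hinj
  have := congrArg (starRingEnd ℂ) h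
  rwa [Complex.conj_conj, Complex.conj_conj] at this

lemma P2_zero (h0 : l 0 = 0) (h1 : ∀ k, k ≠ 0 → Complex.abs (l k) = 1)
    (hinj : Function.Injective l) (P : ℂ × ℂ)
    (hall : ∀ jj : Fin 5, Complex.abs (P.1 - l jj * P.2) = 1) : P.2 = 0 := by
  have hα : Complex.abs P.1 = 1 := by
    have := hall 0; rwa [h0, zero_mul, sub_zero] at this
  have hα0 : P.1 ≠ 0 := by intro h; rw [h] at hα; simp at hα
  set w : ℂ := P.1 * (starRingEnd ℂ) P.2 with hw
  set s : ℝ := normSq P.2 with hs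
  have hQ : ∀ j : Fin 5, j ≠ 0 →
      w * ((starRingEnd ℂ) (l j))^2 + (starRingEnd ℂ) w = (s:ℂ) * (starRingEnd ℂ) (l j) := by
    intro j hj
    have hns : normSq (P.1 - l j * P.2) = 1 := normSq_one_of_abs (hall j)
    rw [Complex.normSq_sub, map_mul, normSq_one_of_abs (h1 j hj), one_mul,
      normSq_one_of_abs hα] at hns
    have hre : (w * (starRingEnd ℂ) (l j)).re = s / 2 := by
      have hrw : P.1 * (starRingEnd ℂ) (l j * P.2) = w * (starRingEnd ℂ) (l j) := by
        rw [map_mul, hw]; ring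
      rw [← hrw]; rw [hs]; linarith [hns]
    have hcx : w * (starRingEnd ℂ) (l j) + (starRingEnd ℂ) (w * (starRingEnd ℂ) (l j))
        = ((2 * (w * (starRingEnd ℂ) (l j)).re : ℝ) : ℂ) := Complex.add_conj _
    rw [hre] at hcx
    have hcx2 : w * (starRingEnd ℂ) (l j) + (starRingEnd ℂ) w * l j = (s:ℂ) := by
      rw [map_mul, Complex.conj_conj] at hcx
      push_cast at hcx
      linear_combination hcx
    have hone : (starRingEnd ℂ) (l j) * l j = 1 := conj_mul_self (h1 j hj)
    linear_combination ((starRingEnd ℂ) (l j)) * hcx2 - ((starRingEnd ℂ) w) * hone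
  have hQ1 := hQ 1 (by decide)
  have hQ2 := hQ 2 (by decide)
  have hQ3 := hQ 3 (by decide)
  have h12 : w * ((starRingEnd ℂ) (l 1) + (starRingEnd ℂ) (l 2)) = (s:ℂ) := by
    have hne : (starRingEnd ℂ) (l 1) - (starRingEnd ℂ) (l 2) ≠ 0 :=
      sub_ne_zero.mpr (conj_ll_inj hinj (by decide))
    have hfac : (w * ((starRingEnd ℂ) (l 1) + (starRingEnd ℂ) (l 2)) - (s:ℂ))
        * ((starRingEnd ℂ) (l 1) - (starRingEnd ℂ) (l 2)) = 0 := by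
      linear_combination hQ1 - hQ2
    rcases mul_eq_zero.mp hfac with h | h
    · exact sub_eq_zero.mp h
    · exact absurd h hne
  have h13 : w * ((starRingEnd ℂ) (l 1) + (starRingEnd ℂ) (l 3)) = (s:ℂ) := by
    have hne : (starRingEnd ℂ) (l 1) - (starRingEnd ℂ) (l 3) ≠ 0 :=
      sub_ne_zero.mpr (conj_ll_inj hinj (by decide))
    have hfac : (w * ((starRingEnd ℂ) (l 1) + (starRingEnd ℂ) (l 3)) - (s:ℂ))
        * ((starRingEnd ℂ) (l 1) - (starRingEnd ℂ) (l 3)) = 0 := by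
      linear_combination hQ1 - hQ3
    rcases mul_eq_zero.mp hfac with h | h
    · exact sub_eq_zero.mp h
    · exact absurd h hne
  have hw0 : w = 0 := by
    have hne : (starRingEnd ℂ) (l 2) - (starRingEnd ℂ) (l 3) ≠ 0 :=
      sub_ne_zero.mpr (conj_ll_inj hinj (by decide))
    have : w * ((starRingEnd ℂ) (l 2) - (starRingEnd ℂ) (l 3)) = 0 := by
      linear_combination h12 - h13
    rcases mul_eq_zero.mp this with h | h
    · exact h
    · exact absurd h hne
  have : (starRingEnd ℂ) P.2 = 0 := by
    rcases mul_eq_zero.mp (hw ▸ hw0) with h | h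
    · exact absurd h hα0
    · exact h
  have := congrArg (starRingEnd ℂ) this
  rwa [Complex.conj_conj, map_zero] at this

lemma coeff_unique {a b a' b' : ℂ} (h1 : a + b = a' + b')
    (hI : (a - b) * I = (a' - b') * I) : a = a' ∧ b = b' := by
  have h2 : a - b = a' - b' := mul_right_cancel₀ Complex.I_ne_zero hI
  constructor
  · linear_combination (h1 + h2) / 2
  · linear_combination (h1 - h2) / 2

theorem rigid (h0 : l 0 = 0) (h1 : ∀ k, k ≠ 0 → Complex.abs (l k) = 1)
    (hinj : Function.Injective l) (hc : ∀ k, k ≠ 0 → Complex.abs (l k - 1) < 1/2)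
    (hp : ∀ j k m n : Fin 5, j ≠ 0 → k ≠ 0 → m ≠ 0 → n ≠ 0 →
      ({j, k} : Finset (Fin 5)) ≠ {m, n} → l j * l k ≠ l m * l n)
    (T : (ℂ × ℂ) ≃ₗ[ℝ] (ℂ × ℂ)) (hT : ∀ p, NN l (T p) = NN l p) :
    ∃ μ : ℂ, Complex.abs μ = 1 ∧ ∀ p : ℂ × ℂ, T p = μ • p := by
  have lne0 : ∀ j : Fin 5, j ≠ 0 → l j ≠ 0 := by
    intro j hj h
    have := h1 j hj; rw [h] at this; simp at this
  choose σ hker htight using sigma_exists h0 h1 hinj hc T hT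
  have hTsymm : ∀ p, NN l (T.symm p) = NN l p := by
    intro p
    have := hT (T.symm p)
    rw [T.apply_symm_apply] at this
    exact this.symm
  choose σ' hker' htight' using sigma_exists h0 h1 hinj hc T.symm hTsymm
  have hback : ∀ k, σ' (σ k) = k := by
    intro k
    have hκ : ((l k, (1:ℂ)) : ℂ × ℂ).1 - l k * ((l k, (1:ℂ)) : ℂ × ℂ).2 = 0 := by simp
    have ha := hker k _ hκ
    have hb := hker' (σ k) _ ha
    rw [T.symm_apply_apply] at hb
    have hb' : l k - l (σ' (σ k)) = 0 := by
      have e1 : ((l k, (1:ℂ)) : ℂ × ℂ).1 = l k := rfl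
      have e2 : ((l k, (1:ℂ)) : ℂ × ℂ).2 = 1 := rfl
      rw [e1, e2, mul_one] at hb
      exact hb
    exact (hinj (sub_eq_zero.mp hb').symm)
  have hσinj : Function.Injective σ := fun a b hab => by
    rw [← hback a, hab, hback b]
  have hσsurj : Function.Surjective σ := Finite.injective_iff_surjective.mp hσinj
  have hσne : ∀ j k : Fin 5, j ≠ k → l (σ j) - l (σ k) ≠ 0 := by
    intro j k hjk
    exact sub_ne_zero.mpr (fun h => hjk (hσinj (hinj h)))
  -- the coefficients A k, B k
  have hrepex : ∀ k : Fin 5, ∃ Ak Bk : ℂ, ∀ z : ℂ,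
      (T (z • wv l k)).1 - l (σ k) * (T (z • wv l k)).2
        = Ak * z + Bk * (starRingEnd ℂ) z := by
    intro k
    set F1 : ℂ := (T (wv l k)).1 - l (σ k) * (T (wv l k)).2 with hF1
    set FI : ℂ := (T (I • wv l k)).1 - l (σ k) * (T (I • wv l k)).2 with hFI
    refine ⟨(F1 - I * FI)/2, (F1 + I * FI)/2, ?_⟩
    intro z
    have hsp : z • wv l k = z.re • wv l k + z.im • (I • wv l k) := by
      apply Prod.ext
      · simp only [Prod.smul_fst, Prod.fst_add, smul_eq_mul, Complex.real_smul]
        linear_combination (-(wv l k).1) * (Complex.re_add_im z)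
      · simp only [Prod.smul_snd, Prod.snd_add, smul_eq_mul, Complex.real_smul]
        linear_combination (-(wv l k).2) * (Complex.re_add_im z)
    have hlin : (T (z • wv l k)).1 - l (σ k) * (T (z • wv l k)).2
        = (z.re : ℂ) * F1 + (z.im : ℂ) * FI := by
      rw [hsp, map_add, map_smul, map_smul]
      simp only [Prod.fst_add, Prod.snd_add, Prod.smul_fst, Prod.smul_snd, Complex.real_smul,
        hF1, hFI]
      ring
    rw [hlin]
    have hcz : (starRingEnd ℂ) z = (z.re:ℂ) - (z.im:ℂ) * I := by
      apply Complex.ext <;> simp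
    rw [hcz]
    linear_combination ((F1 - I * FI)/2) * (Complex.re_add_im z)
      + ((z.im:ℂ) * FI) * Complex.I_sq
  choose A B hrep using hrepex
  -- structure of A,B from tightness
  have hD : ∀ k, (B k = 0 ∧ Complex.abs (A k) = 1) ∨ (A k = 0 ∧ Complex.abs (B k) = 1) := by
    intro k
    have e1 : normSq (A k + B k) = 1 := by
      have h := htight k 1 (map_one Complex.abs)
      rw [hrep k 1] at h
      simp only [map_one, mul_one] at h
      exact normSq_one_of_abs h
    have e2 : normSq (A k - B k) = 1 := by
      have h := htight k I Complex.abs_I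
      rw [hrep k I] at h
      have hrw : A k * I + B k * (starRingEnd ℂ) I = (A k - B k) * I := by
        rw [Complex.conj_I]; ring
      rw [hrw, map_mul, Complex.abs_I, mul_one] at h
      exact normSq_one_of_abs h
    have e3 : normSq (A k * z5 + B k * (starRingEnd ℂ) z5) = 1 := by
      have h := htight k z5 z5_abs
      rw [hrep k z5] at h
      exact normSq_one_of_abs h
    exact AB_struct e1 e2 e3
  -- master factorization
  have hfw := fw_self h0 h1
  have hH9 : ∀ (k : Fin 5) (p : ℂ × ℂ), (T p).1 - l (σ k) * (T p).2
      = A k * (p.1 - l k * p.2) + B k * (starRingEnd ℂ) (p.1 - l k * p.2) := by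
    intro k p
    set z : ℂ := p.1 - l k * p.2 with hz
    have hker0 : (p - z • wv l k).1 - l k * (p - z • wv l k).2 = 0 := by
      simp only [Prod.fst_sub, Prod.snd_sub, Prod.smul_fst, Prod.smul_snd, smul_eq_mul]
      linear_combination (-1 : ℂ) * hz - z * (hfw k)
    have h9a := hker k _ hker0
    have hTsplit : T p = T (p - z • wv l k) + T (z • wv l k) := by
      rw [← map_add, sub_add_cancel]
    have hfinal : (T p).1 - l (σ k) * (T p).2
        = ((T (p - z • wv l k)).1 - l (σ k) * (T (p - z • wv l k)).2)
          + ((T (z • wv l k)).1 - l (σ k) * (T (z • wv l k)).2) := by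
      rw [hTsplit]
      simp only [Prod.fst_add, Prod.snd_add]
      ring
    rw [hfinal, h9a, zero_add, hrep k z]
  -- coordinate equations
  have hEqX : ∀ (k : Fin 5) (x : ℂ), (T (x, (0:ℂ))).1 - l (σ k) * (T (x, (0:ℂ))).2
      = A k * x + B k * (starRingEnd ℂ) x := by
    intro k x
    have h := hH9 k (x, (0:ℂ))
    have e1 : ((x, (0:ℂ)) : ℂ × ℂ).1 = x := rfl
    have e2 : ((x, (0:ℂ)) : ℂ × ℂ).2 = 0 := rfl
    rw [e1, e2, mul_zero, sub_zero] at h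
    exact h
  have hEqY : ∀ (k : Fin 5) (y : ℂ), (T ((0:ℂ), y)).1 - l (σ k) * (T ((0:ℂ), y)).2
      = -(A k * (l k * y)) - B k * (starRingEnd ℂ) (l k * y) := by
    intro k y
    have h := hH9 k ((0:ℂ), y)
    have e1 : (((0:ℂ), y) : ℂ × ℂ).1 = 0 := rfl
    have e2 : (((0:ℂ), y) : ℂ × ℂ).2 = y := rfl
    rw [e1, e2, zero_sub, map_neg] at h
    rw [h]; ring
  -- cross relations
  have hcross : ∀ j k : Fin 5,
      (l (σ 0) - l (σ j)) * (A k - A 0) = (l (σ 0) - l (σ k)) * (A j - A 0) ∧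
      (l (σ 0) - l (σ j)) * (B k - B 0) = (l (σ 0) - l (σ k)) * (B j - B 0) := by
    intro j k
    have hR : ∀ (m : Fin 5) (x : ℂ), (l (σ 0) - l (σ m)) * (T (x, (0:ℂ))).2
        = (A m - A 0) * x + (B m - B 0) * (starRingEnd ℂ) x := by
      intro m x
      linear_combination (hEqX m x) - (hEqX 0 x)
    have E1 : ((l (σ 0) - l (σ j)) * (A k - A 0)) + ((l (σ 0) - l (σ j)) * (B k - B 0))
        = ((l (σ 0) - l (σ k)) * (A j - A 0)) + ((l (σ 0) - l (σ k)) * (B j - B 0)) := by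
      have ha := hR k (1:ℂ)
      have hb := hR j (1:ℂ)
      simp only [map_one, mul_one] at ha hb
      linear_combination (l (σ 0) - l (σ k)) * hb - (l (σ 0) - l (σ j)) * ha
    have EI : (((l (σ 0) - l (σ j)) * (A k - A 0)) - ((l (σ 0) - l (σ j)) * (B k - B 0))) * I
        = (((l (σ 0) - l (σ k)) * (A j - A 0)) - ((l (σ 0) - l (σ k)) * (B j - B 0))) * I := by
      have ha := hR k I
      have hb := hR j I
      rw [Complex.conj_I] at ha hb
      linear_combination (l (σ 0) - l (σ k)) * hb - (l (σ 0) - l (σ j)) * ha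
    exact coeff_unique E1 EI
  -- global type uniformity
  have Hglob : (∀ k, B k = 0 ∧ Complex.abs (A k) = 1)
      ∨ (∀ k, A k = 0 ∧ Complex.abs (B k) = 1) := by
    rcases hD 0 with ⟨hB0, hA0⟩ | ⟨hA0, hB0⟩
    · left
      intro k
      rcases hD k with hk | ⟨hAk, hBk⟩
      · exact hk
      · exfalso
        have hA0ne : A 0 ≠ 0 := fun h => by rw [h] at hA0; simp at hA0
        have hBkne : B k ≠ 0 := fun h => by rw [h] at hBk; simp at hBk
        have hk0 : k ≠ 0 := fun h => hA0ne (h ▸ hAk)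
        set j : Fin 5 := if k = 1 then 2 else 1 with hj
        have hjk : j ≠ k := by
          rw [hj]; split
          · rename_i hh; rw [hh]; decide
          · rename_i hh; exact fun hcon => hh hcon.symm
        have hj0 : j ≠ 0 := by rw [hj]; split <;> decide
        have hcj : l (σ 0) - l (σ j) ≠ 0 := hσne 0 j (Ne.symm hj0)
        have hck : l (σ 0) - l (σ k) ≠ 0 := hσne 0 k (Ne.symm hk0)
        have hBj : B j ≠ 0 := by
          intro hBjz
          have hB := (hcross j k).2
          rw [hB0, hBjz] at hB
          simp only [sub_zero] at hB
          rcases mul_eq_zero.mp (by linear_combination hB : (l (σ 0) - l (σ j)) * (B k) = 0) with h | h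
          · exact hcj h
          · exact hBkne h
        have hAj : A j = 0 := by
          rcases hD j with ⟨hBj', _⟩ | ⟨hAj', _⟩
          · exact absurd hBj' hBj
          · exact hAj'
        have hA := (hcross j k).1
        rw [hAk, hAj] at hA
        have hfac : (l (σ j) - l (σ k)) * A 0 = 0 := by linear_combination hA
        rcases mul_eq_zero.mp hfac with h | h
        · exact hjk (hσinj (hinj (sub_eq_zero.mp h)))
        · exact hA0ne h
    · right
      intro k
      rcases hD k with ⟨hBk, hAk⟩ | hk
      swap
      · exact hk
      · exfalso
        have hB0ne : B 0 ≠ 0 := fun h => by rw [h] at hB0; simp at hB0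
        have hAkne : A k ≠ 0 := fun h => by rw [h] at hAk; simp at hAk
        have hk0 : k ≠ 0 := fun h => hB0ne (h ▸ hBk)
        set j : Fin 5 := if k = 1 then 2 else 1 with hj
        have hjk : j ≠ k := by
          rw [hj]; split
          · rename_i hh; rw [hh]; decide
          · rename_i hh; exact fun hcon => hh hcon.symm
        have hj0 : j ≠ 0 := by rw [hj]; split <;> decide
        have hcj : l (σ 0) - l (σ j) ≠ 0 := hσne 0 j (Ne.symm hj0)
        have hck : l (σ 0) - l (σ k) ≠ 0 := hσne 0 k (Ne.symm hk0)
        have hAj : A j ≠ 0 := by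
          intro hAjz
          have hA := (hcross j k).1
          rw [hA0, hAjz] at hA
          simp only [sub_zero] at hA
          rcases mul_eq_zero.mp (by linear_combination hA : (l (σ 0) - l (σ j)) * (A k) = 0) with h | h
          · exact hcj h
          · exact hAkne h
        have hBj : B j = 0 := by
          rcases hD j with ⟨hBj', _⟩ | ⟨hAj', _⟩
          · exact hBj'
          · exact absurd hAj' hAj
        have hB := (hcross j k).2
        rw [hBk, hBj] at hB
        have hfac : (l (σ j) - l (σ k)) * B 0 = 0 := by linear_combination hB
        rcases mul_eq_zero.mp hfac with h | h
        · exact hjk (hσinj (hinj (sub_eq_zero.mp h)))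
        · exact hB0ne h
  rcases Hglob with hLin | hConj
  · -- linear case
    have hPc : ∀ k, (T ((1:ℂ), (0:ℂ))).1 - l (σ k) * (T ((1:ℂ), (0:ℂ))).2 = A k := by
      intro k
      have h := hEqX k 1
      rw [(hLin k).1] at h
      simpa using h
    have hall : ∀ jj : Fin 5,
        Complex.abs ((T ((1:ℂ), (0:ℂ))).1 - l jj * (T ((1:ℂ), (0:ℂ))).2) = 1 := by
      intro jj
      obtain ⟨k, hk⟩ := hσsurj jj
      rw [← hk, hPc k]
      exact (hLin k).2
    have hP2 : (T ((1:ℂ), (0:ℂ))).2 = 0 := P2_zero h0 h1 hinj _ hall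
    set α : ℂ := (T ((1:ℂ), (0:ℂ))).1 with hαd
    have hAk : ∀ k, A k = α := by
      intro k
      rw [← hPc k, hP2, mul_zero, sub_zero]
    have hαabs : Complex.abs α = 1 := by rw [← hAk 0]; exact (hLin 0).2
    have hα0 : α ≠ 0 := fun h => by rw [h] at hαabs; simp at hαabs
    have hQc : ∀ k, (T ((0:ℂ), (1:ℂ))).1 - l (σ k) * (T ((0:ℂ), (1:ℂ))).2 = -(α * l k) := by
      intro k
      have h := hEqY k 1
      rw [(hLin k).1, hAk k] at h
      rw [h]; ring
    obtain ⟨k₁, hk₁⟩ := hσsurj 0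
    by_cases hk₁0 : k₁ = 0
    · -- σ 0 = 0 : conclude T = α • id
      rw [hk₁0] at hk₁
      have hσk0 : ∀ k : Fin 5, k ≠ 0 → σ k ≠ 0 := by
        intro k hk h
        exact hk (hσinj (h.trans hk₁.symm))
      set δ : ℂ := (T ((0:ℂ), (1:ℂ))).2 with hδd
      have h00 : (T ((0:ℂ), (1:ℂ))).1 = 0 := by
        have h2 := hQc 0
        rw [hk₁, h0] at h2
        rw [zero_mul, sub_zero, mul_zero, neg_zero] at h2
        exact h2
      have heqk : ∀ k : Fin 5, k ≠ 0 → l (σ k) * δ = α * l k := by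
        intro k hk
        have h := hQc k
        rw [h00] at h
        linear_combination -h
      have hδ0 : δ ≠ 0 := by
        intro h
        have h2 := heqk 1 (by decide)
        rw [h, mul_zero] at h2
        exact (mul_ne_zero hα0 (lne0 1 (by decide))) h2.symm
      obtain ⟨k', hk'⟩ := hσsurj 4
      have hk'0 : k' ≠ 0 := by
        intro h
        rw [h, hk₁] at hk'
        exact (by decide : (0 : Fin 5) ≠ 4) hk'
      have e1 : l 4 * δ = α * l k' := by rw [← hk']; exact heqk k' hk'0
      have e2 : l (σ 4) * δ = α * l 4 := heqk 4 (by decide)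
      have hσ40 : σ 4 ≠ 0 := hσk0 4 (by decide)
      have h44 : (α * δ) * (l 4 * l 4) = (α * δ) * (l (σ 4) * l k') := by
        linear_combination (α * l 4) * e1 - (α * l k') * e2
      have hll : l 4 * l 4 = l (σ 4) * l k' := mul_left_cancel₀ (mul_ne_zero hα0 hδ0) h44
      by_cases hset : ({4, 4} : Finset (Fin 5)) = {σ 4, k'}
      swap
      · exact absurd hll (hp 4 4 (σ 4) k' (by decide) (by decide) hσ40 hk'0 hset)
      have hσ44 : σ 4 = 4 := by
        have hm : σ 4 ∈ ({σ 4, k'} : Finset (Fin 5)) := Finset.mem_insert_self _ _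
        rw [← hset] at hm
        simpa using hm
      have hδα : δ = α := by
        rw [hσ44] at e2
        exact mul_left_cancel₀ (lne0 4 (by decide))
          (by linear_combination e2 : l 4 * δ = l 4 * α)
      have hσ11 : σ 1 = 1 := by
        have h2 := heqk 1 (by decide)
        rw [hδα] at h2
        apply hinj
        exact mul_right_cancel₀ hα0 (by linear_combination h2 : l (σ 1) * α = l 1 * α)
      refine ⟨α, hαabs, ?_⟩
      intro p
      have hx2 : ∀ x : ℂ, (T (x, (0:ℂ))).2 = 0 := by
        intro x
        have ha := hEqX 0 x
        have hb := hEqX 1 x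
        rw [(hLin 0).1, hAk 0] at ha
        rw [(hLin 1).1, hAk 1] at hb
        have hfac : (l (σ 0) - l (σ 1)) * (T (x, (0:ℂ))).2 = 0 := by
          linear_combination hb - ha
        rcases mul_eq_zero.mp hfac with h | h
        · exact absurd h (hσne 0 1 (by decide))
        · exact h
      have hx1 : ∀ x : ℂ, (T (x, (0:ℂ))).1 = α * x := by
        intro x
        have ha := hEqX 0 x
        rw [(hLin 0).1, hAk 0, hx2 x, mul_zero, sub_zero, zero_mul, add_zero] at ha
        exact ha
      have hy1 : ∀ y : ℂ, (T ((0:ℂ), y)).1 = 0 := by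
        intro y
        have ha := hEqY 0 y
        rw [hk₁, h0] at ha
        simpa using ha
      have hy2 : ∀ y : ℂ, (T ((0:ℂ), y)).2 = α * y := by
        intro y
        have ha := hEqY 1 y
        rw [(hLin 1).1, hAk 1, hy1 y, hσ11] at ha
        have hfac : l 1 * ((T ((0:ℂ), y)).2 - α * y) = 0 := by
          linear_combination -ha
        rcases mul_eq_zero.mp hfac with h | h
        · exact absurd h (lne0 1 (by decide))
        · linear_combination h
      have hsplit : T p = T (p.1, (0:ℂ)) + T ((0:ℂ), p.2) := by
        rw [← map_add]
        congr 1
        apply Prod.ext <;> simp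
      apply Prod.ext
      · rw [hsplit]
        simp only [Prod.fst_add]
        rw [hx1, hy1, add_zero, Prod.smul_fst, smul_eq_mul]
      · rw [hsplit]
        simp only [Prod.snd_add]
        rw [hx2, hy2, zero_add, Prod.smul_snd, smul_eq_mul]
    · -- σ 0 ≠ 0 : contradiction
      exfalso
      have hβ : (T ((0:ℂ), (1:ℂ))).1 = -(α * l k₁) := by
        have h := hQc k₁
        rw [hk₁, h0, zero_mul, sub_zero] at h
        exact h
      have hδ : l (σ 0) * (T ((0:ℂ), (1:ℂ))).2 = (T ((0:ℂ), (1:ℂ))).1 := by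
        have h := hQc 0
        rw [h0, mul_zero, neg_zero] at h
        linear_combination -h
      have h1' : l (σ 0) * (T ((0:ℂ), (1:ℂ))).2 = -(α * l k₁) := hδ.trans hβ
      set k : Fin 5 := if k₁ = 1 then 2 else 1 with hkd
      have hk0 : k ≠ 0 := by rw [hkd]; split <;> decide
      have hkk₁ : k ≠ k₁ := by
        rw [hkd]; split
        · rename_i hh; rw [hh]; decide
        · rename_i hh; exact fun hcon => hh hcon.symm
      have hσk0 : σ k ≠ 0 := fun h => hkk₁ (hσinj (h.trans hk₁.symm))
      have hσ00 : σ 0 ≠ 0 := fun h => hk₁0 (hσinj (hk₁.trans h.symm))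
      have h2 := hQc k
      have h3 : α * (l (σ k) * l k₁) = α * (l (σ 0) * (l k₁ - l k)) := by
        linear_combination (l (σ 0)) * h2 + (l (σ k)) * h1' + (-(l (σ 0))) * hβ
      have hll2 : l (σ k) * l k₁ = l (σ 0) * (l k₁ - l k) := mul_left_cancel₀ hα0 h3
      have habs1 : Complex.abs (l (σ k) * l k₁) = 1 := by
        rw [map_mul, h1 (σ k) hσk0, h1 k₁ hk₁0, mul_one]
      have habs2 : Complex.abs (l (σ 0) * (l k₁ - l k)) < 1 := by
        rw [map_mul, h1 (σ 0) hσ00, one_mul]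
        have hdec : l k₁ - l k = (l k₁ - 1) + (1 - l k) := by ring
        calc Complex.abs (l k₁ - l k) ≤ Complex.abs (l k₁ - 1) + Complex.abs (1 - l k) := by
              rw [hdec]; exact Complex.abs.add_le _ _
          _ < 1 := by
              have hck := hc k hk0
              have hck₁ := hc k₁ hk₁0
              rw [Complex.abs.map_sub 1 (l k)] at *
              linarith
      rw [hll2] at habs1
      exact absurd habs1 habs2.ne
  · -- conjugate case : contradiction
    exfalso
    have hPc : ∀ k, (T ((1:ℂ), (0:ℂ))).1 - l (σ k) * (T ((1:ℂ), (0:ℂ))).2 = B k := by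
      intro k
      have h := hEqX k 1
      rw [(hConj k).1] at h
      simpa using h
    have hall : ∀ jj : Fin 5,
        Complex.abs ((T ((1:ℂ), (0:ℂ))).1 - l jj * (T ((1:ℂ), (0:ℂ))).2) = 1 := by
      intro jj
      obtain ⟨k, hk⟩ := hσsurj jj
      rw [← hk, hPc k]
      exact (hConj k).2
    have hP2 : (T ((1:ℂ), (0:ℂ))).2 = 0 := P2_zero h0 h1 hinj _ hall
    set α : ℂ := (T ((1:ℂ), (0:ℂ))).1 with hαd
    have hBk : ∀ k, B k = α := by
      intro k
      rw [← hPc k, hP2, mul_zero, sub_zero]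
    have hαabs : Complex.abs α = 1 := by rw [← hBk 0]; exact (hConj 0).2
    have hα0 : α ≠ 0 := fun h => by rw [h] at hαabs; simp at hαabs
    have hQc : ∀ k, (T ((0:ℂ), (1:ℂ))).1 - l (σ k) * (T ((0:ℂ), (1:ℂ))).2
        = -(α * (starRingEnd ℂ) (l k)) := by
      intro k
      have h := hEqY k 1
      rw [(hConj k).1, hBk k, mul_one] at h
      rw [h]; ring
    obtain ⟨k₁, hk₁⟩ := hσsurj 0
    by_cases hk₁0 : k₁ = 0
    · -- σ 0 = 0
      rw [hk₁0] at hk₁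
      have hσk0 : ∀ k : Fin 5, k ≠ 0 → σ k ≠ 0 := by
        intro k hk h
        exact hk (hσinj (h.trans hk₁.symm))
      set δ : ℂ := (T ((0:ℂ), (1:ℂ))).2 with hδd
      have h00 : (T ((0:ℂ), (1:ℂ))).1 = 0 := by
        have h2 := hQc 0
        rw [hk₁, h0, map_zero, mul_zero, neg_zero, zero_mul, sub_zero] at h2
        exact h2
      have heqk : ∀ k : Fin 5, k ≠ 0 → l (σ k) * δ = α * (starRingEnd ℂ) (l k) := by
        intro k hk
        have h := hQc k
        rw [h00] at h
        linear_combination -h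
      have hδ0 : δ ≠ 0 := by
        intro h
        have h2 := heqk 1 (by decide)
        rw [h, mul_zero] at h2
        have habs : Complex.abs (α * (starRingEnd ℂ) (l 1)) = 1 := by
          rw [map_mul, Complex.abs_conj, h1 1 (by decide), hαabs, mul_one]
        rw [← h2] at habs
        simp at habs
      have hm : ∀ k : Fin 5, k ≠ 0 → (l (σ k) * l k) * δ = α := by
        intro k hk
        have hone := conj_mul_self (h1 k hk)
        linear_combination (l k) * (heqk k hk) + α * hone
      have h12 : l (σ 1) * l 1 = l (σ 2) * l 2 :=
        mul_right_cancel₀ hδ0 ((hm 1 (by decide)).trans (hm 2 (by decide)).symm)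
      have h13 : l (σ 1) * l 1 = l (σ 3) * l 3 :=
        mul_right_cancel₀ hδ0 ((hm 1 (by decide)).trans (hm 3 (by decide)).symm)
      by_cases h21 : σ 2 = 1
      · have hne : ({σ 1, (1 : Fin 5)} : Finset (Fin 5)) ≠ {σ 3, 3} := by
          intro h
          have h1m : (1 : Fin 5) ∈ ({σ 3, (3 : Fin 5)} : Finset (Fin 5)) := by
            rw [← h]; simp
          rcases Finset.mem_insert.mp h1m with h' | h'
          · exact (by decide : (3 : Fin 5) ≠ 2) (hσinj (h'.symm.trans h21.symm))
          · exact (by decide : (1 : Fin 5) ≠ 3) (Finset.mem_singleton.mp h')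
        exact absurd h13 (hp (σ 1) 1 (σ 3) 3 (hσk0 1 (by decide)) (by decide)
          (hσk0 3 (by decide)) (by decide) hne)
      · have hne : ({σ 1, (1 : Fin 5)} : Finset (Fin 5)) ≠ {σ 2, 2} := by
          intro h
          have h1m : (1 : Fin 5) ∈ ({σ 2, (2 : Fin 5)} : Finset (Fin 5)) := by
            rw [← h]; simp
          rcases Finset.mem_insert.mp h1m with h' | h'
          · exact h21 h'.symm
          · exact (by decide : (1 : Fin 5) ≠ 2) (Finset.mem_singleton.mp h')
        exact absurd h12 (hp (σ 1) 1 (σ 2) 2 (hσk0 1 (by decide)) (by decide)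
          (hσk0 2 (by decide)) (by decide) hne)
    · -- σ 0 ≠ 0
      have hβ : (T ((0:ℂ), (1:ℂ))).1 = -(α * (starRingEnd ℂ) (l k₁)) := by
        have h := hQc k₁
        rw [hk₁, h0, zero_mul, sub_zero] at h
        exact h
      have hδ : l (σ 0) * (T ((0:ℂ), (1:ℂ))).2 = (T ((0:ℂ), (1:ℂ))).1 := by
        have h := hQc 0
        rw [h0, map_zero, mul_zero, neg_zero] at h
        linear_combination -h
      have h1' : l (σ 0) * (T ((0:ℂ), (1:ℂ))).2 = -(α * (starRingEnd ℂ) (l k₁)) :=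
        hδ.trans hβ
      set k : Fin 5 := if k₁ = 1 then 2 else 1 with hkd
      have hk0 : k ≠ 0 := by rw [hkd]; split <;> decide
      have hkk₁ : k ≠ k₁ := by
        rw [hkd]; split
        · rename_i hh; rw [hh]; decide
        · rename_i hh; exact fun hcon => hh hcon.symm
      have hσk0 : σ k ≠ 0 := fun h => hkk₁ (hσinj (h.trans hk₁.symm))
      have hσ00 : σ 0 ≠ 0 := fun h => hk₁0 (hσinj (hk₁.trans h.symm))
      have h2 := hQc k
      have h3 : α * (l (σ k) * (starRingEnd ℂ) (l k₁))
          = α * (l (σ 0) * ((starRingEnd ℂ) (l k₁) - (starRingEnd ℂ) (l k))) := by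
        linear_combination (l (σ 0)) * h2 + (l (σ k)) * h1' + (-(l (σ 0))) * hβ
      have hll2 : l (σ k) * (starRingEnd ℂ) (l k₁)
          = l (σ 0) * ((starRingEnd ℂ) (l k₁) - (starRingEnd ℂ) (l k)) :=
        mul_left_cancel₀ hα0 h3
      have habs1 : Complex.abs (l (σ k) * (starRingEnd ℂ) (l k₁)) = 1 := by
        rw [map_mul, Complex.abs_conj, h1 (σ k) hσk0, h1 k₁ hk₁0, mul_one]
      have habs2 : Complex.abs (l (σ 0)
          * ((starRingEnd ℂ) (l k₁) - (starRingEnd ℂ) (l k))) < 1 := by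
        rw [map_mul, h1 (σ 0) hσ00, one_mul]
        have hcsub : (starRingEnd ℂ) (l k₁) - (starRingEnd ℂ) (l k)
            = (starRingEnd ℂ) (l k₁ - l k) := (map_sub _ _ _).symm
        rw [hcsub, Complex.abs_conj]
        have hdec : l k₁ - l k = (l k₁ - 1) + (1 - l k) := by ring
        calc Complex.abs (l k₁ - l k) ≤ Complex.abs (l k₁ - 1) + Complex.abs (1 - l k) := by
              rw [hdec]; exact Complex.abs.add_le _ _
          _ < 1 := by
              have hck := hc k hk0
              have hck₁ := hc k₁ hk₁0
              rw [Complex.abs.map_sub 1 (l k)] at *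
              linarith
      rw [hll2] at habs1
      exact absurd habs1 habs2.ne
end Main

def cc : Fin 5 → ℕ := ![0, 1, 2, 4, 8]

lemma cc_le (k : Fin 5) : cc k ≤ 8 := by fin_cases k <;> simp [cc]

def th : Fin 5 → ℝ := fun k => (cc k : ℝ) / 100

lemma th_bound (k : Fin 5) : 0 ≤ th k ∧ th k ≤ 8/100 := by
  have h2 : (cc k : ℝ) ≤ 8 := by exact_mod_cast cc_le k
  have h3 : (0:ℝ) ≤ (cc k : ℝ) := by positivity
  simp only [th]
  constructor <;> linarith

def ll : Fin 5 → ℂ := fun k => if k = 0 then 0 else Complex.exp ((th k : ℂ) * I)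

lemma ll_zero : ll 0 = 0 := rfl

lemma ll_abs (k : Fin 5) (hk : k ≠ 0) : Complex.abs (ll k) = 1 := by
  rw [ll]; simp only [if_neg hk]; exact Complex.abs_exp_ofReal_mul_I _

lemma ll_re (k : Fin 5) (hk : k ≠ 0) : 0 < (ll k).re := by
  rw [ll]; simp only [if_neg hk]; rw [Complex.exp_ofReal_mul_I_re]
  apply Real.cos_pos_of_mem_Ioo
  have hb := th_bound k
  have := Real.pi_gt_three
  constructor <;> [linarith [hb.1]; linarith [hb.2]]

lemma ll_close (k : Fin 5) (hk : k ≠ 0) : Complex.abs (ll k - 1) < 1/2 := by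
  rw [ll]; simp only [if_neg hk]
  have hb := th_bound k
  have h1 : Complex.abs ((th k : ℂ) * I) ≤ 8/100 := by
    rw [map_mul, Complex.abs_I, mul_one, Complex.abs_ofReal, _root_.abs_of_nonneg hb.1]
    exact hb.2
  have := Complex.abs_exp_sub_one_le (x := ((th k : ℂ) * I)) (by linarith)
  linarith

lemma exp_inj_small {s t : ℝ} (hs : |s - t| < 2 * Real.pi)
    (h : Complex.exp ((s:ℝ) * I) = Complex.exp ((t:ℝ) * I)) : s = t := by
  rw [Complex.exp_eq_exp_iff_exists_int] at h
  obtain ⟨n, hn⟩ := h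
  have hI : ((s - t : ℝ) : ℂ) * I = (n : ℂ) * (2 * Real.pi) * I := by
    push_cast at hn ⊢; linear_combination hn
  have h2 : (s - t : ℝ) = (n : ℝ) * (2 * Real.pi) := by
    have := congrArg (fun z => (z * (-I)).re) hI
    simpa [Complex.mul_re, Complex.mul_im] using this
  have hpi : (0:ℝ) < 2 * Real.pi := by positivity
  have hn0 : n = 0 := by
    by_contra hne
    have h3 : (1:ℝ) ≤ |(n:ℝ)| := by exact_mod_cast Int.one_le_abs (by exact_mod_cast hne)
    have : 2 * Real.pi ≤ |(s - t : ℝ)| := by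
      rw [h2, abs_mul, _root_.abs_of_pos hpi]
      nlinarith
    linarith
  rw [hn0] at h2; push_cast at h2; linarith

lemma ll_prod : ∀ j k m n : Fin 5, j ≠ 0 → k ≠ 0 → m ≠ 0 → n ≠ 0 →
    ({j, k} : Finset (Fin 5)) ≠ {m, n} → ll j * ll k ≠ ll m * ll n := by
  intro j k m n hj hk hm hn hne heq
  simp only [ll, if_neg hj, if_neg hk, if_neg hm, if_neg hn, ← Complex.exp_add] at heq
  have h1 : ((th j : ℂ) * I) + ((th k : ℂ) * I) = ((th j + th k : ℝ) : ℂ) * I := by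
    push_cast; ring
  have h2 : ((th m : ℂ) * I) + ((th n : ℂ) * I) = ((th m + th n : ℝ) : ℂ) * I := by
    push_cast; ring
  rw [h1, h2] at heq
  have hpi := Real.pi_gt_three
  have hsum := exp_inj_small (s := th j + th k) (t := th m + th n) (by
      have := th_bound j; have := th_bound k; have := th_bound m; have := th_bound n
      rw [abs_lt]; constructor <;> nlinarith) heq
  have hcc : cc j + cc k = cc m + cc n := by
    simp only [th] at hsum
    have : ((cc j + cc k : ℕ) : ℝ) = ((cc m + cc n : ℕ) : ℝ) := by push_cast; linarith
    exact_mod_cast this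
  have hdec : ∀ j k m n : Fin 5, j ≠ 0 → k ≠ 0 → m ≠ 0 → n ≠ 0 →
      ({j, k} : Finset (Fin 5)) ≠ {m, n} → cc j + cc k ≠ cc m + cc n := by decide
  exact hdec j k m n hj hk hm hn hne hcc

lemma ll_inj : Function.Injective ll := by
  intro j k hjk
  by_contra hne
  rcases eq_or_ne j 0 with rfl | hj
  · rw [ll_zero] at hjk
    have := ll_abs k (Ne.symm hne)
    rw [← hjk] at this; simp at this
  · rcases eq_or_ne k 0 with rfl | hk
    · rw [ll_zero] at hjk
      have := ll_abs j hj
      rw [hjk] at this; simp at this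
    · have hfin : ({j, j} : Finset (Fin 5)) ≠ {j, k} := by
        intro h
        have : k ∈ ({j, j} : Finset (Fin 5)) := h ▸ (by simp)
        simp at this
        exact hne this.symm
      exact ll_prod j j j k hj hj hj hk hfin (by rw [hjk])
end S17

/-- there is a complex norm on `ℂ²`, namely
`‖(x,y)‖ = max_{0 ≤ k ≤ 4} |x - λ_k y|` where `λ₀ = 0` and `λ₁, …, λ₄` are
unimodular with positive real parts and pairwise distinct products
`λ_j λ_k` (for distinct pairs `{j,k}`), for which every surjective `ℝ`-linear
isometry of `ℂ²` is trivial, i.e. of the form `(x,y) ↦ (μx, μy)` for some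
`μ ∈ ℂ` with `|μ| = 1`. -/
theorem stmt_17 :
    ∃ (l : Fin 5 → ℂ) (N : ℂ × ℂ → ℝ),
      l 0 = 0 ∧
      (∀ k : Fin 5, k ≠ 0 → ‖l k‖ = 1) ∧
      (∀ k : Fin 5, k ≠ 0 → 0 < (l k).re) ∧
      (∀ j k m n : Fin 5, j ≠ 0 → k ≠ 0 → m ≠ 0 → n ≠ 0 →
        ({j, k} : Finset (Fin 5)) ≠ {m, n} → l j * l k ≠ l m * l n) ∧
      (∀ p : ℂ × ℂ, N p = ⨆ k : Fin 5, ‖p.1 - l k * p.2‖) ∧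
      (∀ (c : ℂ) (p : ℂ × ℂ), N (c • p) = ‖c‖ * N p) ∧
      (∀ p q : ℂ × ℂ, N (p + q) ≤ N p + N q) ∧
      (∀ p : ℂ × ℂ, N p = 0 → p = 0) ∧
      (∀ T : (ℂ × ℂ) ≃ₗ[ℝ] (ℂ × ℂ), (∀ p, N (T p) = N p) →
        ∃ μ : ℂ, ‖μ‖ = 1 ∧ ∀ p : ℂ × ℂ, T p = μ • p) := by
  refine ⟨S17.ll, S17.NN S17.ll, S17.ll_zero, S17.ll_abs, S17.ll_re, S17.ll_prod,
    fun p => rfl, S17.NN_smul S17.ll, S17.NN_add S17.ll,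
    fun p => S17.NN_zero S17.ll S17.ll_zero (S17.ll_abs 1 (by decide)) p, ?_⟩
  intro T hT
  exact S17.rigid S17.ll_zero S17.ll_abs S17.ll_inj S17.ll_close S17.ll_prod T hT

end
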